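/- Let n ≥ 1 and 0 < p < ∞. There is a constant c > 0 depending only on n and p such that for every α ≥ 1 there exists a locally square integrable function g on (0,∞)×ℝⁿ with 0 < ‖g‖_{T^{p,2}_1} < ∞ and ‖g‖_{T^{p,2}_α} ≥ c α^{n/p} ‖g‖_{T^{p,2}_1}. (Consequently the growth α^{n/p} in the change-of-aperture inequality cannot be improved; in particular α^{n/τ} with τ = min(p,2) is optimal when p ≤ 2.) -/

import Mathlib

open MeasureTheory Metric Set Filter ENNReal

noncomputable section

/-- `ℝⁿ` as a Euclidean space. -/
abbrev En (n : ℕ) : Type := EuclideanSpace ℝ (Fin n)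

/-- `g` is (measurable and) locally square integrable on `(0,∞) × ℝⁿ`. -/
def LocSqInt (n : ℕ) (g : ℝ → En n → ℝ) : Prop :=
  Measurable (Function.uncurry g) ∧
  LocallyIntegrableOn (fun q : ℝ × En n => (g q.1 q.2) ^ 2)
    (Set.Ioi (0 : ℝ) ×ˢ (Set.univ : Set (En n)))

/-- The conical square function `A^{(α)} g (x)` of aperture `α`, with values in `[0,∞]`. -/
def conicalSq (n : ℕ) (α : ℝ) (g : ℝ → En n → ℝ) (x : En n) : ℝ≥0∞ :=
  (∫⁻ t in Set.Ioi (0 : ℝ), ∫⁻ y,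
      (ball x (α * t)).indicator (fun y => ENNReal.ofReal (|g t y| ^ 2 / t ^ (n + 1))) y) ^
    (1 / 2 : ℝ)

/-- The tent space quasi-norm `‖g‖_{T^{p,2}_α} = ‖A^{(α)} g‖_{L^p(ℝⁿ)}`, with values in `[0,∞]`. -/
def tentNorm (n : ℕ) (p α : ℝ) (g : ℝ → En n → ℝ) : ℝ≥0∞ :=
  (∫⁻ x, conicalSq n α g x ^ p) ^ (1 / p)

/-- The vertical square function `V g (x)`. -/
def vertSq (n : ℕ) (g : ℝ → En n → ℝ) (x : En n) : ℝ≥0∞ :=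
  (∫⁻ t in Set.Ioi (0 : ℝ), ENNReal.ofReal (|g t x| ^ 2 / t)) ^ (1 / 2 : ℝ)

/-- `‖V g‖_{L^p(ℝⁿ)}`, with values in `[0,∞]`. -/
def vertNorm (n : ℕ) (p : ℝ) (g : ℝ → En n → ℝ) : ℝ≥0∞ :=
  (∫⁻ x, vertSq n g x ^ p) ^ (1 / p)

/-- The tent `T_α B` of aperture `α` above the ball `B = B(x,r)`. -/
def tent (n : ℕ) (α : ℝ) (x : En n) (r : ℝ) : Set (ℝ × En n) :=
  {q | 0 < q.1 ∧ q.1 < r / α ∧ q.2 ∈ ball x (r - α * q.1)}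

/-- `∫_{T_α B} |g(t,y)|² dy dt / t`. -/
def tentIntegral (n : ℕ) (α : ℝ) (g : ℝ → En n → ℝ) (x : En n) (r : ℝ) : ℝ≥0∞ :=
  ∫⁻ q in tent n α x r, ENNReal.ofReal (|g q.1 q.2| ^ 2 / q.1)

/-- A `T^{p,2}_α`-atom associated with the ball `B(x,r)`: it is supported in the tent
`T_α B(x,r)` and satisfies `∫_{T_α B} |a|² dy dt/t ≤ α^{-n} |B|^{-(2/p - 1)}`. -/
def IsTentAtom (n : ℕ) (p α : ℝ) (a : ℝ → En n → ℝ) (x : En n) (r : ℝ) : Prop :=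
  (∀ t y, (t, y) ∉ tent n α x r → a t y = 0) ∧
  tentIntegral n α a x r ≤
    ENNReal.ofReal (α ^ (-(n : ℝ))) * volume (ball x r) ^ (-(2 / p - 1))

/-- The grand square function `G_λ g (x)` with exponent `nλ`. -/
def grandSq (n : ℕ) (l : ℝ) (g : ℝ → En n → ℝ) (x : En n) : ℝ≥0∞ :=
  (∫⁻ t in Set.Ioi (0 : ℝ), ∫⁻ y,
      ENNReal.ofReal ((t / (dist x y + t)) ^ ((n : ℝ) * l) * |g t y| ^ 2 / t ^ (n + 1))) ^
    (1 / 2 : ℝ)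

namespace Sharp

def S (n : ℕ) : Set (ℝ × En n) := (Set.Ioo (1:ℝ) 2) ×ˢ ball (0:En n) 1

def g0 (n : ℕ) : ℝ → En n → ℝ := fun t y => (S n).indicator (fun _ => (1:ℝ)) (t, y)

lemma measurableSet_S (n : ℕ) : MeasurableSet (S n) :=
  measurableSet_Ioo.prod measurableSet_ball

lemma g0_mem {n : ℕ} {t : ℝ} {y : En n} (h : (t, y) ∈ S n) : g0 n t y = 1 :=
  Set.indicator_of_mem h _

lemma g0_not_mem {n : ℕ} {t : ℝ} {y : En n} (h : (t, y) ∉ S n) : g0 n t y = 0 :=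
  Set.indicator_of_notMem h _

/-- Lower bound for the conical square function on `ball 0 α`. -/
lemma conical_lower (n : ℕ) {α : ℝ} (hα : 1 ≤ α) {x : En n} (hx : x ∈ ball (0:En n) α) :
    (ENNReal.ofReal ((1/2:ℝ)^(n+2)) * volume (ball (0:En n) (1/2:ℝ))) ^ (1/2:ℝ)
      ≤ conicalSq n α (g0 n) x := by
  unfold conicalSq
  apply ENNReal.rpow_le_rpow ?_ (by norm_num)
  have key : ∀ t ∈ Set.Ioo (3/2:ℝ) 2,
      ENNReal.ofReal ((1/2:ℝ)^(n+1)) * volume (ball (0:En n) (1/2:ℝ))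
        ≤ ∫⁻ y, (ball x (α * t)).indicator
            (fun y => ENNReal.ofReal (|g0 n t y| ^ 2 / t ^ (n + 1))) y := by
    intro t ht
    rw [← lintegral_indicator_const (measurableSet_ball (x := (0:En n)) (ε := (1/2:ℝ)))]
    apply lintegral_mono
    intro y
    by_cases hy : y ∈ ball (0:En n) (1/2:ℝ)
    · rw [Set.indicator_of_mem hy]
      have hy0 : dist y (0:En n) < 1/2 := mem_ball.1 hy
      have hx0 : dist x (0:En n) < α := mem_ball.1 hx
      have hyx : y ∈ ball x (α * t) := by
        rw [mem_ball]
        have h1 : dist y x ≤ dist y (0:En n) + dist (0:En n) x := dist_triangle _ _ _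
        have h2 : dist (0:En n) x = dist x (0:En n) := dist_comm _ _
        nlinarith [ht.1, ht.2]
      rw [Set.indicator_of_mem hyx]
      have hty : (t, y) ∈ S n := ⟨⟨by linarith [ht.1], ht.2⟩, mem_ball.2 (by linarith)⟩
      rw [g0_mem hty]
      apply ENNReal.ofReal_le_ofReal
      have ht0 : (0:ℝ) < t := by linarith [ht.1]
      have htpow : t ^ (n+1) ≤ 2 ^ (n+1) := pow_le_pow_left₀ ht0.le ht.2.le _
      have htpos : (0:ℝ) < t ^ (n+1) := pow_pos ht0 _
      rw [abs_one, one_pow, one_div_pow]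
      calc (1:ℝ)/2^(n+1) ≤ 1/t^(n+1) := by
            apply one_div_le_one_div_of_le htpos htpow
        _ = 1/t^(n+1) := rfl
    · rw [Set.indicator_of_notMem hy]
      exact zero_le
  calc ENNReal.ofReal ((1/2:ℝ)^(n+2)) * volume (ball (0:En n) (1/2:ℝ))
      = (ENNReal.ofReal ((1/2:ℝ)^(n+1)) * volume (ball (0:En n) (1/2:ℝ)))
          * volume (Set.Ioo (3/2:ℝ) 2) := by
        rw [Real.volume_Ioo]
        rw [show (2:ℝ) - 3/2 = 1/2 by norm_num]
        rw [show ((1:ℝ)/2)^(n+2) = (1/2:ℝ)^(n+1) * (1/2) by ring]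
        rw [ENNReal.ofReal_mul (by positivity)]
        ring
    _ = ∫⁻ _ in Set.Ioo (3/2:ℝ) 2,
          ENNReal.ofReal ((1/2:ℝ)^(n+1)) * volume (ball (0:En n) (1/2:ℝ)) := by
        rw [setLIntegral_const]
    _ ≤ ∫⁻ t in Set.Ioo (3/2:ℝ) 2, ∫⁻ y, (ball x (α * t)).indicator
          (fun y => ENNReal.ofReal (|g0 n t y| ^ 2 / t ^ (n + 1))) y :=
        setLIntegral_mono' measurableSet_Ioo key
    _ ≤ ∫⁻ t in Set.Ioi (0:ℝ), ∫⁻ y, (ball x (α * t)).indicator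
          (fun y => ENNReal.ofReal (|g0 n t y| ^ 2 / t ^ (n + 1))) y :=
        lintegral_mono_set (fun t ht => lt_trans (by norm_num) ht.1)

/-- Upper bound for the conical square function at aperture 1. -/
lemma conical_upper (n : ℕ) (x : En n) :
    conicalSq n 1 (g0 n) x ≤ (volume (ball (0:En n) 1)) ^ (1/2:ℝ) := by
  unfold conicalSq
  apply ENNReal.rpow_le_rpow ?_ (by norm_num)
  calc (∫⁻ t in Set.Ioi (0:ℝ), ∫⁻ y, (ball x (1 * t)).indicator
          (fun y => ENNReal.ofReal (|g0 n t y| ^ 2 / t ^ (n + 1))) y)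
      ≤ ∫⁻ t in Set.Ioi (0:ℝ),
          (Set.Ioo (1:ℝ) 2).indicator (fun _ => volume (ball (0:En n) 1)) t := by
        apply setLIntegral_mono' measurableSet_Ioi
        intro t _
        by_cases hT : t ∈ Set.Ioo (1:ℝ) 2
        · rw [Set.indicator_of_mem hT]
          calc (∫⁻ y, (ball x (1 * t)).indicator
                (fun y => ENNReal.ofReal (|g0 n t y| ^ 2 / t ^ (n + 1))) y)
              ≤ ∫⁻ y, (ball (0:En n) 1).indicator (fun _ => (1:ℝ≥0∞)) y := by
                apply lintegral_mono
                intro y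
                by_cases hy1 : y ∈ ball x (1 * t)
                · rw [Set.indicator_of_mem hy1]
                  by_cases hy2 : y ∈ ball (0:En n) 1
                  · rw [Set.indicator_of_mem hy2, g0_mem ⟨hT, hy2⟩]
                    rw [abs_one, one_pow]
                    refine le_trans (ENNReal.ofReal_le_ofReal ?_) (by simp :
                      ENNReal.ofReal 1 ≤ 1)
                    have ht1 : (1:ℝ) ≤ t := hT.1.le
                    have : (1:ℝ) ≤ t ^ (n+1) := one_le_pow₀ ht1
                    rw [div_le_one (by linarith)]
                    exact this
                  · rw [g0_not_mem (fun h => hy2 h.2), Set.indicator_of_notMem hy2]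
                    simp
                · rw [Set.indicator_of_notMem hy1]
                  exact zero_le
            _ = 1 * volume (ball (0:En n) 1) := lintegral_indicator_const measurableSet_ball _
            _ = volume (ball (0:En n) 1) := one_mul _
        · rw [Set.indicator_of_notMem hT]
          have h0 : (fun y : En n => (ball x (1 * t)).indicator
              (fun y => ENNReal.ofReal (|g0 n t y| ^ 2 / t ^ (n + 1))) y) = fun _ => 0 := by
            funext y
            by_cases hy : y ∈ ball x (1 * t)
            · rw [Set.indicator_of_mem hy, g0_not_mem (fun h => hT h.1)]
              simp
            · rw [Set.indicator_of_notMem hy]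
          rw [h0, lintegral_zero]
    _ ≤ ∫⁻ t, (Set.Ioo (1:ℝ) 2).indicator (fun _ => volume (ball (0:En n) 1)) t :=
        setLIntegral_le_lintegral _ _
    _ = volume (ball (0:En n) 1) * volume (Set.Ioo (1:ℝ) 2) :=
        lintegral_indicator_const measurableSet_Ioo _
    _ = volume (ball (0:En n) 1) := by
        rw [Real.volume_Ioo]; norm_num

/-- Vanishing of the conical square function at aperture 1 outside `ball 0 3`. -/
lemma conical_zero (n : ℕ) {x : En n} (hx : x ∉ ball (0:En n) 3) :
    conicalSq n 1 (g0 n) x = 0 := by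
  unfold conicalSq
  have hF : ∀ t : ℝ, (∫⁻ y, (ball x (1 * t)).indicator
      (fun y => ENNReal.ofReal (|g0 n t y| ^ 2 / t ^ (n + 1))) y) = 0 := by
    intro t
    have h0 : (fun y : En n => (ball x (1 * t)).indicator
        (fun y => ENNReal.ofReal (|g0 n t y| ^ 2 / t ^ (n + 1))) y) = fun _ => 0 := by
      funext y
      by_cases hy : y ∈ ball x (1 * t)
      · rw [Set.indicator_of_mem hy]
        by_cases hS : (t, y) ∈ S n
        · exfalso
          apply hx
          rw [mem_ball]
          have h1 : dist y x < 1 * t := mem_ball.1 hy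
          have h2 : dist y (0:En n) < 1 := mem_ball.1 hS.2
          have h3 : t < 2 := hS.1.2
          calc dist x (0:En n) ≤ dist x y + dist y (0:En n) := dist_triangle _ _ _
            _ < 1 * t + 1 := by rw [dist_comm x y]; linarith
            _ ≤ 3 := by linarith
        · rw [g0_not_mem hS]; simp
      · rw [Set.indicator_of_notMem hy]
    rw [h0, lintegral_zero]
  simp only [hF, lintegral_zero]
  exact ENNReal.zero_rpow_of_pos (by norm_num)

lemma locSqInt (n : ℕ) : LocSqInt n (g0 n) := by
  constructor
  · exact measurable_const.indicator (measurableSet_S n)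
  · have heq : (fun q : ℝ × En n => (g0 n q.1 q.2)^2) = (S n).indicator (fun _ => (1:ℝ)) := by
      funext q
      by_cases h : q ∈ S n
      · have h1 : g0 n q.1 q.2 = 1 := Set.indicator_of_mem h _
        rw [h1, Set.indicator_of_mem h]; norm_num
      · have h1 : g0 n q.1 q.2 = 0 := Set.indicator_of_notMem h _
        rw [h1, Set.indicator_of_notMem h]; norm_num
    rw [heq]
    apply Integrable.locallyIntegrable ?_ |>.locallyIntegrableOn
    refine (integrable_indicator_iff (measurableSet_S n)).2 ?_
    refine integrableOn_const (lt_top_iff_ne_top.1 ?_) (by simp)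
    have hv : volume (S n) = volume (Set.Ioo (1:ℝ) 2) * volume (ball (0:En n) 1) := by
      rw [S, Measure.volume_eq_prod, Measure.prod_prod]
    rw [hv, Real.volume_Ioo]
    exact ENNReal.mul_lt_top ENNReal.ofReal_lt_top measure_ball_lt_top

lemma tent_lower (n : ℕ) {p : ℝ} (hp : 0 < p) {α : ℝ} (hα : 1 ≤ α) :
    (ENNReal.ofReal ((1/2:ℝ)^(n+2)) * volume (ball (0:En n) (1/2:ℝ))) ^ (1/2:ℝ)
        * (volume (ball (0:En n) α)) ^ (1/p)
      ≤ tentNorm n p α (g0 n) := by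
  set K := (ENNReal.ofReal ((1/2:ℝ)^(n+2)) * volume (ball (0:En n) (1/2:ℝ))) ^ (1/2:ℝ) with hK
  calc K * (volume (ball (0:En n) α)) ^ (1/p)
      = (K ^ p * volume (ball (0:En n) α)) ^ (1/p) := by
        rw [ENNReal.mul_rpow_of_nonneg _ _ (by positivity), ← ENNReal.rpow_mul,
          mul_one_div_cancel hp.ne', ENNReal.rpow_one]
    _ = (∫⁻ _ in ball (0:En n) α, K ^ p) ^ (1/p) := by rw [setLIntegral_const]
    _ ≤ (∫⁻ x in ball (0:En n) α, conicalSq n α (g0 n) x ^ p) ^ (1/p) := by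
        apply ENNReal.rpow_le_rpow ?_ (by positivity)
        exact setLIntegral_mono' measurableSet_ball
          (fun x hx => ENNReal.rpow_le_rpow (conical_lower n hα hx) hp.le)
    _ ≤ tentNorm n p α (g0 n) :=
        ENNReal.rpow_le_rpow (setLIntegral_le_lintegral _ _) (by positivity)

lemma tent_upper (n : ℕ) {p : ℝ} (hp : 0 < p) :
    tentNorm n p 1 (g0 n)
      ≤ (volume (ball (0:En n) 1)) ^ (1/2:ℝ) * (volume (ball (0:En n) 3)) ^ (1/p) := by
  set M := (volume (ball (0:En n) 1)) ^ (1/2:ℝ) with hM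
  calc tentNorm n p 1 (g0 n)
      ≤ (∫⁻ x, (ball (0:En n) 3).indicator (fun _ => M ^ p) x) ^ (1/p) := by
        apply ENNReal.rpow_le_rpow ?_ (by positivity)
        apply lintegral_mono
        intro x
        by_cases hx : x ∈ ball (0:En n) 3
        · rw [Set.indicator_of_mem hx]
          exact ENNReal.rpow_le_rpow (conical_upper n x) hp.le
        · have hz : conicalSq n 1 (g0 n) x = 0 := conical_zero n hx
          simp [Set.indicator_of_notMem hx, hz, ENNReal.zero_rpow_of_pos hp]
    _ = (M ^ p * volume (ball (0:En n) 3)) ^ (1/p) := by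
        rw [lintegral_indicator_const measurableSet_ball]
    _ = M * (volume (ball (0:En n) 3)) ^ (1/p) := by
        rw [ENNReal.mul_rpow_of_nonneg _ _ (by positivity), ← ENNReal.rpow_mul,
          mul_one_div_cancel hp.ne', ENNReal.rpow_one]

end Sharp

/-- (Sharpness: the growth `α^{n/p}` is attained.) There is `c = c(n,p) > 0`
such that for every `α ≥ 1` there is a locally square integrable `g` with
`0 < ‖g‖_{T^{p,2}_1} < ∞` and `‖g‖_{T^{p,2}_α} ≥ c α^{n/p} ‖g‖_{T^{p,2}_1}`. -/
theorem statement13 (n : ℕ) (hn : 1 ≤ n) (p : ℝ) (hp : 0 < p) :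
    ∃ c : ℝ, 0 < c ∧ ∀ α : ℝ, 1 ≤ α →
      ∃ g : ℝ → En n → ℝ, LocSqInt n g ∧
        0 < tentNorm n p 1 g ∧ tentNorm n p 1 g < ⊤ ∧
        ENNReal.ofReal (c * α ^ ((n : ℝ) / p)) * tentNorm n p 1 g ≤ tentNorm n p α g := by
  set V1 := volume (ball (0:En n) 1) with hV1
  set V3 := volume (ball (0:En n) 3) with hV3
  set Vh := volume (ball (0:En n) (1/2:ℝ)) with hVh
  set K := (ENNReal.ofReal ((1/2:ℝ)^(n+2)) * Vh) ^ (1/2:ℝ) with hK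
  set M := V1 ^ (1/2:ℝ) with hM
  set R := K * V1 ^ (1/p) with hR
  set L := M * V3 ^ (1/p) with hL
  have hV1pos : 0 < V1 := measure_ball_pos _ _ one_pos
  have hV3pos : 0 < V3 := measure_ball_pos _ _ (by norm_num)
  have hVhpos : 0 < Vh := measure_ball_pos _ _ (by norm_num)
  have hV1top : V1 ≠ ⊤ := measure_ball_lt_top.ne
  have hV3top : V3 ≠ ⊤ := measure_ball_lt_top.ne
  have hVhtop : Vh ≠ ⊤ := measure_ball_lt_top.ne
  have hbase0 : ENNReal.ofReal ((1/2:ℝ)^(n+2)) * Vh ≠ 0 :=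
    (ENNReal.mul_pos (ENNReal.ofReal_pos.2 (by positivity)).ne' hVhpos.ne').ne'
  have hbaseT : ENNReal.ofReal ((1/2:ℝ)^(n+2)) * Vh ≠ ⊤ :=
    ENNReal.mul_ne_top ENNReal.ofReal_ne_top hVhtop
  have hK0 : K ≠ 0 := (ENNReal.rpow_pos (pos_iff_ne_zero.2 hbase0) hbaseT).ne'
  have hKT : K ≠ ⊤ := ENNReal.rpow_ne_top_of_nonneg (by norm_num) hbaseT
  have hM0 : M ≠ 0 := (ENNReal.rpow_pos hV1pos hV1top).ne'
  have hMT : M ≠ ⊤ := ENNReal.rpow_ne_top_of_nonneg (by norm_num) hV1top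
  have hR0 : R ≠ 0 :=
    mul_ne_zero hK0 (ENNReal.rpow_pos hV1pos hV1top).ne'
  have hRT : R ≠ ⊤ :=
    ENNReal.mul_ne_top hKT (ENNReal.rpow_ne_top_of_nonneg (by positivity) hV1top)
  have hL0 : L ≠ 0 := mul_ne_zero hM0 (ENNReal.rpow_pos hV3pos hV3top).ne'
  have hLT : L ≠ ⊤ :=
    ENNReal.mul_ne_top hMT (ENNReal.rpow_ne_top_of_nonneg (by positivity) hV3top)
  refine ⟨R.toReal / L.toReal,
    div_pos (ENNReal.toReal_pos hR0 hRT) (ENNReal.toReal_pos hL0 hLT), ?_⟩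
  intro α hα
  have hα0 : (0:ℝ) < α := lt_of_lt_of_le one_pos hα
  refine ⟨Sharp.g0 n, Sharp.locSqInt n, ?_, ?_, ?_⟩
  · calc (0:ℝ≥0∞) < R := pos_iff_ne_zero.2 hR0
      _ = K * (volume (ball (0:En n) 1)) ^ (1/p) := by rw [hR, hV1]
      _ ≤ tentNorm n p 1 (Sharp.g0 n) := Sharp.tent_lower n hp le_rfl
  · exact lt_of_le_of_lt (Sharp.tent_upper n hp) hLT.lt_top
  · -- key computation
    have hballα : (volume (ball (0:En n) α)) ^ (1/p)
        = ENNReal.ofReal (α ^ ((n:ℝ)/p)) * V1 ^ (1/p) := by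
      have h1 : volume (ball (0:En n) α) = ENNReal.ofReal (α ^ n) * V1 := by
        rw [hV1, Measure.addHaar_ball_of_pos volume _ hα0, finrank_euclideanSpace_fin]
      rw [h1, ENNReal.mul_rpow_of_nonneg _ _ (by positivity),
        ENNReal.ofReal_rpow_of_pos (pow_pos hα0 n)]
      congr 2
      rw [← Real.rpow_natCast α n, ← Real.rpow_mul hα0.le, mul_one_div]
    have hcL : ENNReal.ofReal (R.toReal / L.toReal) * L = R := by
      have hne : ENNReal.ofReal (R.toReal / L.toReal) * L ≠ ⊤ :=
        ENNReal.mul_ne_top ENNReal.ofReal_ne_top hLT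
      rw [← ENNReal.toReal_eq_toReal_iff' hne hRT, ENNReal.toReal_mul,
        ENNReal.toReal_ofReal (by positivity),
        div_mul_cancel₀ _ (ENNReal.toReal_pos hL0 hLT).ne']
    calc ENNReal.ofReal (R.toReal / L.toReal * α ^ ((n:ℝ)/p)) * tentNorm n p 1 (Sharp.g0 n)
        ≤ ENNReal.ofReal (R.toReal / L.toReal * α ^ ((n:ℝ)/p)) * L :=
          mul_le_mul_right (Sharp.tent_upper n hp) _
      _ = ENNReal.ofReal (α ^ ((n:ℝ)/p)) * (ENNReal.ofReal (R.toReal / L.toReal) * L) := by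
          rw [ENNReal.ofReal_mul (by positivity)]
          ring
      _ = ENNReal.ofReal (α ^ ((n:ℝ)/p)) * R := by rw [hcL]
      _ = K * ((volume (ball (0:En n) α)) ^ (1/p)) := by
          rw [hballα, hR]; ring
      _ ≤ tentNorm n p α (Sharp.g0 n) := Sharp.tent_lower n hp hα


end
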